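/- Normalising constant for Bayesian linear regression with a normal inverse-Gamma prior (Equation 20): Let N₀ and P be positive natural numbers, X₀ an N₀ × P real matrix, y₀ ∈ ℝ^{N₀}, Λ₀ a symmetric positive-definite P × P real matrix, μ₀ ∈ ℝ^P, α₀, γ₀ > 0 and a₀ ≥ 0. Put X⋆ = √a₀ · X₀, y⋆ = √a₀ · y₀, Λₙ = X⋆ᵀX⋆ + Λ₀ (which is positive definite), μₙ = Λₙ^{−1}(Λ₀μ₀ + X⋆ᵀy⋆), αₙ = α₀ + a₀N₀/2, and γₙ = γ₀ + (1/2)(y⋆ᵀy⋆ + μ₀ᵀΛ₀μ₀ − μₙᵀΛₙμₙ). Then ∫_0^∞ ∫_{ℝ^P} ( ∏_{i=1}^{N₀} (2πσ²)^{−1/2} e^{−(y₀ᵢ − X₀ᵢᵀβ)²/(2σ²)} )^{a₀} · (2πσ²)^{−P/2} √(det Λ₀) · e^{−(β−μ₀)ᵀΛ₀(β−μ₀)/(2σ²)} · (γ₀^{α₀}/Γ(α₀)) (σ²)^{−α₀−1} e^{−γ₀/σ²} dβ d(σ²) = √(det Λ₀ / det Λₙ) · (γ₀^{α₀}/γₙ^{αₙ})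 · (Γ(αₙ)/Γ(α₀)) · (2π)^{−a₀N₀/2}. -/

import Mathlib

open MeasureTheory Matrix Real


open scoped MatrixOrder in
lemma gauss_matrix {P : ℕ} {A : Matrix (Fin P) (Fin P) ℝ} (hA : A.PosDef) :
    ∫ β : Fin P → ℝ, Real.exp (-(β ⬝ᵥ (A *ᵥ β))) = Real.sqrt (π ^ P / A.det) := by
  classical
  set B := CFC.sqrt A with hBdef
  have hB : B.PosSemidef := (CFC.sqrt_nonneg A).posSemidef
  have hBB : B * B = A := CFC.sqrt_mul_sqrt_self A hA.posSemidef.nonneg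
  have hBsymm : Bᵀ = B := by
    rw [← conjTranspose_eq_transpose_of_trivial]; exact hB.isHermitian
  have detB_sq : B.det * B.det = A.det := by rw [← det_mul, hBB]
  have detB_nonneg : 0 ≤ B.det := by
    rw [hB.isHermitian.det_eq_prod_eigenvalues]
    exact Finset.prod_nonneg fun i _ => hB.eigenvalues_nonneg i
  have detB_pos : 0 < B.det := lt_of_le_of_ne detB_nonneg
    (fun h => by simp [← h] at detB_sq; exact hA.det_pos.ne detB_sq)
  have hquad : ∀ β : Fin P → ℝ, β ⬝ᵥ (A *ᵥ β) = (B *ᵥ β) ⬝ᵥ (B *ᵥ β) := by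
    intro β
    rw [← hBB, ← mulVec_mulVec, dotProduct_mulVec, ← mulVec_transpose, hBsymm]
  have hmap := Real.map_matrix_volume_pi_eq_smul_volume_pi (M := B) detB_pos.ne'
  have hmeas : Measurable (toLin' B) := (toLin' B).continuous_of_finiteDimensional.measurable
  have hg : Measurable fun x : Fin P → ℝ => Real.exp (-(x ⬝ᵥ x)) := by
    apply Real.measurable_exp.comp
    apply Measurable.neg
    exact Finset.measurable_sum _ fun i _ => ((measurable_pi_apply i).mul (measurable_pi_apply i))
  calc ∫ β : Fin P → ℝ, Real.exp (-(β ⬝ᵥ (A *ᵥ β)))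
      = ∫ β : Fin P → ℝ, Real.exp (-((toLin' B β) ⬝ᵥ (toLin' B β))) := by
        simp_rw [hquad]; rfl
    _ = ∫ x, Real.exp (-(x ⬝ᵥ x)) ∂(Measure.map (toLin' B) volume) :=
        (integral_map hmeas.aemeasurable hg.aestronglyMeasurable).symm
    _ = (B.det)⁻¹ * ∫ x : Fin P → ℝ, Real.exp (-(x ⬝ᵥ x)) := by
        rw [hmap, integral_smul_measure, ENNReal.toReal_ofReal (abs_nonneg _),
          abs_of_pos (inv_pos.2 detB_pos), smul_eq_mul]
    _ = (B.det)⁻¹ * Real.sqrt π ^ P := by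
        congr 1
        have : ∀ x : Fin P → ℝ, Real.exp (-(x ⬝ᵥ x)) = ∏ i, Real.exp (-(x i)^2) := by
          intro x
          rw [← Real.exp_sum]
          congr 1
          simp [dotProduct, pow_two, Finset.sum_neg_distrib]
        simp_rw [this]
        rw [volume_pi, integral_fintype_prod_eq_pow (ι := Fin P) (fun t : ℝ => Real.exp (-t^2))]
        rw [Fintype.card_fin]
        congr 1
        simpa using integral_gaussian 1
    _ = Real.sqrt (π ^ P / A.det) := by
        have h1 : Real.sqrt A.det = B.det := by
          rw [← detB_sq]; exact Real.sqrt_mul_self detB_nonneg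
        have h2 : (Real.sqrt π ^ P) ^ 2 = π ^ P := by
          rw [← pow_mul, mul_comm, pow_mul, Real.sq_sqrt pi_nonneg]
        have h3 : Real.sqrt (π ^ P) = Real.sqrt π ^ P := by
          rw [← h2, Real.sqrt_sq (by positivity)]
        rw [Real.sqrt_div (by positivity), h3, h1, div_eq_inv_mul]

lemma posDef_smul' {P : ℕ} {M : Matrix (Fin P) (Fin P) ℝ} (hM : M.PosDef) {r : ℝ}
    (hr : 0 < r) : (r • M).PosDef := by
  exact hM.smul hr

lemma gauss_shift {P : ℕ} {M : Matrix (Fin P) (Fin P) ℝ} (hM : M.PosDef)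
    (c : Fin P → ℝ) {t : ℝ} (ht : 0 < t) :
    ∫ β : Fin P → ℝ, Real.exp (-((β - c) ⬝ᵥ (M *ᵥ (β - c))) / (2*t))
      = Real.sqrt ((2*π*t) ^ P / M.det) := by
  have h2t : (0:ℝ) < (2*t)⁻¹ := by positivity
  have hA : ((2*t)⁻¹ • M).PosDef := posDef_smul' hM h2t
  have key : ∀ v : Fin P → ℝ, -(v ⬝ᵥ (M *ᵥ v)) / (2*t)
      = -(v ⬝ᵥ (((2*t)⁻¹ • M) *ᵥ v)) := by
    intro v
    rw [smul_mulVec, dotProduct_smul, smul_eq_mul]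
    field_simp
  calc ∫ β : Fin P → ℝ, Real.exp (-((β - c) ⬝ᵥ (M *ᵥ (β - c))) / (2*t))
      = ∫ β : Fin P → ℝ, Real.exp (-((β - c) ⬝ᵥ (((2*t)⁻¹ • M) *ᵥ (β - c)))) := by
        simp_rw [key]
    _ = ∫ β : Fin P → ℝ, Real.exp (-(β ⬝ᵥ (((2*t)⁻¹ • M) *ᵥ β))) :=
        integral_sub_right_eq_self (fun β : Fin P → ℝ =>
          Real.exp (-(β ⬝ᵥ (((2*t)⁻¹ • M) *ᵥ β)))) c
    _ = Real.sqrt (π ^ P / ((2*t)⁻¹ • M).det) := gauss_matrix hA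
    _ = Real.sqrt ((2*π*t) ^ P / M.det) := by
        rw [det_smul]
        congr 1
        rw [Fintype.card_fin]
        have hd : (0:ℝ) < M.det := hM.det_pos
        rw [div_eq_div_iff (by positivity) hd.ne']
        rw [show (2*π*t : ℝ) = π * (2*t) by ring, mul_pow, mul_assoc,
          ← mul_assoc ((2*t)^P), ← mul_pow, mul_inv_cancel₀ (by positivity : (2*t:ℝ) ≠ 0),
          one_pow, one_mul]


lemma inv_gamma_integral {α γ : ℝ} (hα : 0 < α) (hγ : 0 < γ) :
    ∫ s in Set.Ioi (0:ℝ), s ^ (-α - 1) * Real.exp (-γ / s)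
      = Real.Gamma α / γ ^ α := by
  have h := integral_comp_rpow_Ioi (fun y : ℝ => y ^ (-α-1) * Real.exp (-γ/y))
    (p := -1) (by norm_num)
  rw [← h]
  have heq : Set.EqOn
      (fun x : ℝ => (|(-1:ℝ)| * x ^ ((-1:ℝ) - 1)) •
        ((x ^ (-1:ℝ)) ^ (-α-1) * Real.exp (-γ / x ^ (-1:ℝ))))
      (fun x : ℝ => x ^ (α - 1) * Real.exp (-γ * x ^ (1:ℝ))) (Set.Ioi 0) := by
    intro x hx
    have hx0 : (0:ℝ) < x := hx
    simp only [abs_neg, abs_one, one_mul, smul_eq_mul, Real.rpow_one]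
    rw [Real.rpow_neg_one, Real.inv_rpow hx0.le, ← Real.rpow_neg hx0.le,
      show -γ / x⁻¹ = -γ * x from by field_simp, ← mul_assoc, ← Real.rpow_add hx0]
    ring_nf
  rw [setIntegral_congr_fun measurableSet_Ioi heq,
    integral_rpow_mul_exp_neg_mul_rpow one_pos (by linarith) hγ]
  rw [show -(α - 1 + 1) / 1 = -α by ring, show (α - 1 + 1) / 1 = α by ring,
    Real.rpow_neg hγ.le]
  field_simp

lemma symm_dot {P : ℕ} {M : Matrix (Fin P) (Fin P) ℝ} (hM : Mᵀ = M)
    (x y : Fin P → ℝ) : x ⬝ᵥ (M *ᵥ y) = y ⬝ᵥ (M *ᵥ x) := by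
  rw [dotProduct_mulVec, ← mulVec_transpose, hM, dotProduct_comm]

lemma complete_square {P : ℕ} {M : Matrix (Fin P) (Fin P) ℝ} (hM : Mᵀ = M)
    (μ β : Fin P → ℝ) :
    (β - μ) ⬝ᵥ (M *ᵥ (β - μ))
      = β ⬝ᵥ (M *ᵥ β) - 2 * (β ⬝ᵥ (M *ᵥ μ)) + μ ⬝ᵥ (M *ᵥ μ) := by
  rw [mulVec_sub, dotProduct_sub, sub_dotProduct, sub_dotProduct,
    symm_dot hM μ β]
  ring

lemma norm_expand {N P : ℕ} (X : Matrix (Fin N) (Fin P) ℝ) (y : Fin N → ℝ)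
    (β : Fin P → ℝ) :
    (y - X *ᵥ β) ⬝ᵥ (y - X *ᵥ β)
      = y ⬝ᵥ y - 2 * (β ⬝ᵥ (Xᵀ *ᵥ y)) + β ⬝ᵥ ((Xᵀ * X) *ᵥ β) := by
  rw [dotProduct_sub, sub_dotProduct, sub_dotProduct, ← mulVec_mulVec,
    dotProduct_mulVec β Xᵀ, vecMul_transpose, dotProduct_mulVec β Xᵀ,
    vecMul_transpose, dotProduct_comm (X *ᵥ β) y]
  ring

theorem power_prior_linear_regression_normalising_constant
    (N₀ P : ℕ) (hN₀ : 0 < N₀) (hP : 0 < P)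
    (X₀ : Matrix (Fin N₀) (Fin P) ℝ) (y₀ : Fin N₀ → ℝ)
    (Λ₀ : Matrix (Fin P) (Fin P) ℝ) (hΛ₀ : Λ₀.PosDef)
    (μ₀ : Fin P → ℝ) (α₀ γ₀ : ℝ) (hα₀ : 0 < α₀) (hγ₀ : 0 < γ₀)
    (a₀ : ℝ) (ha₀ : 0 ≤ a₀)
    (Xs : Matrix (Fin N₀) (Fin P) ℝ) (hXs : Xs = Real.sqrt a₀ • X₀)
    (ys : Fin N₀ → ℝ) (hys : ys = Real.sqrt a₀ • y₀)
    (Λn : Matrix (Fin P) (Fin P) ℝ) (hΛn : Λn = Xsᵀ * Xs + Λ₀)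
    (μn : Fin P → ℝ) (hμn : μn = Λn⁻¹ *ᵥ (Λ₀ *ᵥ μ₀ + Xsᵀ *ᵥ ys))
    (αn : ℝ) (hαn : αn = α₀ + a₀ * N₀ / 2)
    (γn : ℝ)
    (hγn : γn = γ₀ + (ys ⬝ᵥ ys + μ₀ ⬝ᵥ (Λ₀ *ᵥ μ₀) - μn ⬝ᵥ (Λn *ᵥ μn)) / 2) :
    Λn.PosDef ∧
    ∫ s in Set.Ioi (0 : ℝ), ∫ β : Fin P → ℝ,
        (∏ i, (2 * π * s) ^ (-(1 : ℝ) / 2)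
            * Real.exp (-(y₀ i - X₀ i ⬝ᵥ β) ^ 2 / (2 * s))) ^ a₀
          * ((2 * π * s) ^ (-(P : ℝ) / 2) * Real.sqrt Λ₀.det
              * Real.exp (-((β - μ₀) ⬝ᵥ (Λ₀ *ᵥ (β - μ₀))) / (2 * s)))
          * ((γ₀ ^ α₀ / Real.Gamma α₀) * s ^ (-α₀ - 1)
              * Real.exp (-γ₀ / s))
      = Real.sqrt (Λ₀.det / Λn.det) * (γ₀ ^ α₀ / γn ^ αn)
          * (Real.Gamma αn / Real.Gamma α₀)
          * (2 * π) ^ (-(a₀ * N₀) / 2) := by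
  have ha₀sq : Real.sqrt a₀ ^ 2 = a₀ := Real.sq_sqrt ha₀
  have hΛ₀symm : Λ₀ᵀ = Λ₀ := by
    rw [← conjTranspose_eq_transpose_of_trivial]; exact hΛ₀.1
  have hXX : (Xsᵀ * Xs).PosSemidef := by
    rw [← conjTranspose_eq_transpose_of_trivial]
    exact posSemidef_conjTranspose_mul_self Xs
  have hΛnPD : Λn.PosDef := hΛn ▸ Matrix.PosDef.posSemidef_add hXX hΛ₀
  have hΛnsymm : Λnᵀ = Λn := by
    rw [← conjTranspose_eq_transpose_of_trivial]; exact hΛnPD.1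
  have hdet₀ : 0 < Λ₀.det := hΛ₀.det_pos
  have hdetn : 0 < Λn.det := hΛnPD.det_pos
  have hμneq : Λn *ᵥ μn = Λ₀ *ᵥ μ₀ + Xsᵀ *ᵥ ys := by
    rw [hμn, mulVec_mulVec, mul_nonsing_inv _ (isUnit_iff_ne_zero.2 hdetn.ne'),
      one_mulVec]
  have keyQ : ∀ β : Fin P → ℝ,
      (ys - Xs *ᵥ β) ⬝ᵥ (ys - Xs *ᵥ β) + (β - μ₀) ⬝ᵥ (Λ₀ *ᵥ (β - μ₀))
        = (β - μn) ⬝ᵥ (Λn *ᵥ (β - μn)) + (2*γn - 2*γ₀) := by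
    intro β
    have h1 : β ⬝ᵥ (Λn *ᵥ β) = β ⬝ᵥ ((Xsᵀ * Xs) *ᵥ β) + β ⬝ᵥ (Λ₀ *ᵥ β) := by
      rw [hΛn, add_mulVec, dotProduct_add]
    have h2 : β ⬝ᵥ (Λn *ᵥ μn) = β ⬝ᵥ (Λ₀ *ᵥ μ₀) + β ⬝ᵥ (Xsᵀ *ᵥ ys) := by
      rw [hμneq, dotProduct_add]
    rw [norm_expand, complete_square hΛ₀symm, complete_square hΛnsymm, h1, h2, hγn]
    ring
  have hγnγ₀ : γ₀ ≤ γn := by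
    have h := keyQ μn
    have hz : (μn - μn) ⬝ᵥ (Λn *ᵥ (μn - μn)) = 0 := by simp
    have h0 : 0 ≤ (ys - Xs *ᵥ μn) ⬝ᵥ (ys - Xs *ᵥ μn) :=
      Finset.sum_nonneg fun i _ => mul_self_nonneg _
    have h1 : 0 ≤ (μn - μ₀) ⬝ᵥ (Λ₀ *ᵥ (μn - μ₀)) := by
      simpa using hΛ₀.posSemidef.dotProduct_mulVec_nonneg (μn - μ₀)
    rw [hz] at h
    linarith
  have hγnpos : 0 < γn := lt_of_lt_of_le hγ₀ hγnγ₀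
  have hαnN : (0:ℝ) ≤ a₀ * N₀ / 2 := by positivity
  have hαnpos : 0 < αn := by rw [hαn]; linarith
  refine ⟨hΛnPD, ?_⟩
  have inner : Set.EqOn
      (fun s : ℝ => ∫ β : Fin P → ℝ,
        (∏ i, (2 * π * s) ^ (-(1 : ℝ) / 2)
            * Real.exp (-(y₀ i - X₀ i ⬝ᵥ β) ^ 2 / (2 * s))) ^ a₀
          * ((2 * π * s) ^ (-(P : ℝ) / 2) * Real.sqrt Λ₀.det
              * Real.exp (-((β - μ₀) ⬝ᵥ (Λ₀ *ᵥ (β - μ₀))) / (2 * s)))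
          * ((γ₀ ^ α₀ / Real.Gamma α₀) * s ^ (-α₀ - 1)
              * Real.exp (-γ₀ / s)))
      (fun s : ℝ => (Real.sqrt (Λ₀.det / Λn.det) * (γ₀ ^ α₀ / Real.Gamma α₀)
          * (2 * π) ^ (-(a₀ * N₀) / 2)) * (s ^ (-αn - 1) * Real.exp (-γn / s)))
      (Set.Ioi 0) := by
    intro s hs
    have hs0 : (0:ℝ) < s := hs
    have hu : (0:ℝ) < 2 * π * s := by positivity
    have hpt : ∀ β : Fin P → ℝ,
        (∏ i, (2 * π * s) ^ (-(1 : ℝ) / 2)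
            * Real.exp (-(y₀ i - X₀ i ⬝ᵥ β) ^ 2 / (2 * s))) ^ a₀
          * ((2 * π * s) ^ (-(P : ℝ) / 2) * Real.sqrt Λ₀.det
              * Real.exp (-((β - μ₀) ⬝ᵥ (Λ₀ *ᵥ (β - μ₀))) / (2 * s)))
          * ((γ₀ ^ α₀ / Real.Gamma α₀) * s ^ (-α₀ - 1)
              * Real.exp (-γ₀ / s))
        = ((2 * π * s) ^ (-(a₀ * (N₀:ℝ)) / 2) * (2 * π * s) ^ (-(P : ℝ) / 2)
            * Real.sqrt Λ₀.det * (γ₀ ^ α₀ / Real.Gamma α₀) * s ^ (-α₀ - 1)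
            * Real.exp (-γn / s))
          * Real.exp (-((β - μn) ⬝ᵥ (Λn *ᵥ (β - μn))) / (2 * s)) := by
      intro β
      have hdot : (y₀ - X₀ *ᵥ β) ⬝ᵥ (y₀ - X₀ *ᵥ β)
          = ∑ i, (y₀ i - X₀ i ⬝ᵥ β) ^ 2 := by
        rw [dotProduct]
        exact Finset.sum_congr rfl fun i _ => by
          simp [Pi.sub_apply, sq, mulVec]
      have hprod : (∏ i, (2 * π * s) ^ (-(1 : ℝ) / 2)
            * Real.exp (-(y₀ i - X₀ i ⬝ᵥ β) ^ 2 / (2 * s)))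
          = (2 * π * s) ^ (-(N₀:ℝ) / 2)
            * Real.exp (-((y₀ - X₀ *ᵥ β) ⬝ᵥ (y₀ - X₀ *ᵥ β)) / (2 * s)) := by
        rw [Finset.prod_mul_distrib, Finset.prod_const, ← Real.exp_sum,
          Finset.card_univ, Fintype.card_fin,
          ← Real.rpow_natCast ((2 * π * s) ^ (-(1:ℝ)/2)) N₀,
          ← Real.rpow_mul hu.le]
        congr 1
        · congr 1; ring
        · rw [hdot, ← Finset.sum_div, neg_div]
          simp [Finset.sum_neg_distrib, neg_div]
      have hpow : ((2 * π * s) ^ (-(N₀:ℝ) / 2)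
            * Real.exp (-((y₀ - X₀ *ᵥ β) ⬝ᵥ (y₀ - X₀ *ᵥ β)) / (2 * s))) ^ a₀
          = (2 * π * s) ^ (-(a₀ * (N₀:ℝ)) / 2)
            * Real.exp (a₀ * (-((y₀ - X₀ *ᵥ β) ⬝ᵥ (y₀ - X₀ *ᵥ β)) / (2 * s))) := by
        rw [Real.mul_rpow (Real.rpow_nonneg hu.le _) (Real.exp_nonneg _),
          ← Real.rpow_mul hu.le, ← Real.exp_mul]
        congr 2
        · ring
        · ring
      have hS : (ys - Xs *ᵥ β) ⬝ᵥ (ys - Xs *ᵥ β)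
          = a₀ * ((y₀ - X₀ *ᵥ β) ⬝ᵥ (y₀ - X₀ *ᵥ β)) := by
        rw [hys, hXs, smul_mulVec, ← smul_sub, smul_dotProduct,
          dotProduct_smul, smul_eq_mul, smul_eq_mul, ← mul_assoc, ← sq, ha₀sq]
      have hexp : Real.exp (a₀ * (-((y₀ - X₀ *ᵥ β) ⬝ᵥ (y₀ - X₀ *ᵥ β)) / (2 * s)))
            * Real.exp (-((β - μ₀) ⬝ᵥ (Λ₀ *ᵥ (β - μ₀))) / (2 * s))
            * Real.exp (-γ₀ / s)
          = Real.exp (-γn / s)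
            * Real.exp (-((β - μn) ⬝ᵥ (Λn *ᵥ (β - μn))) / (2 * s)) := by
        rw [← Real.exp_add, ← Real.exp_add, ← Real.exp_add]
        congr 1
        have h := keyQ β
        rw [hS] at h
        linear_combination (-1/(2*s)) * h
      rw [hprod, hpow]
      linear_combination ((2 * π * s) ^ (-(a₀ * (N₀:ℝ)) / 2)
        * (2 * π * s) ^ (-(P : ℝ) / 2) * Real.sqrt Λ₀.det
        * (γ₀ ^ α₀ / Real.Gamma α₀) * s ^ (-α₀ - 1)) * hexp
    show (∫ β : Fin P → ℝ, _) = _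
    simp only [hpt]
    rw [integral_const_mul, gauss_shift hΛnPD μn hs0]
    -- now pure algebra in s
    have e1 : (2 * π * s) ^ (-(P:ℝ)/2) * Real.sqrt ((2*π*s) ^ P / Λn.det)
        = (Real.sqrt Λn.det)⁻¹ := by
      rw [Real.sqrt_div (by positivity) Λn.det, Real.sqrt_eq_rpow,
        ← Real.rpow_natCast (2*π*s) P, ← Real.rpow_mul hu.le, ← mul_div_assoc,
        ← Real.rpow_add hu]
      have hz : (-(P:ℝ)/2 + (P:ℝ)*(1/2)) = 0 := by ring
      rw [hz, Real.rpow_zero, one_div]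
    have e2 : Real.sqrt Λ₀.det * (Real.sqrt Λn.det)⁻¹
        = Real.sqrt (Λ₀.det / Λn.det) := by
      rw [Real.sqrt_div hdet₀.le, div_eq_mul_inv]
    have e3 : (2 * π * s) ^ (-(a₀ * (N₀:ℝ)) / 2)
        = (2 * π) ^ (-(a₀ * (N₀:ℝ)) / 2) * s ^ (-(a₀ * (N₀:ℝ)) / 2) := by
      rw [← Real.mul_rpow (by positivity) hs0.le]
    have e4 : s ^ (-(a₀ * (N₀:ℝ)) / 2) * s ^ (-α₀ - 1) = s ^ (-αn - 1) := by
      rw [← Real.rpow_add hs0, hαn]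
      congr 1
      ring
    calc (2 * π * s) ^ (-(a₀ * (N₀:ℝ)) / 2) * (2 * π * s) ^ (-(P : ℝ) / 2)
            * Real.sqrt Λ₀.det * (γ₀ ^ α₀ / Real.Gamma α₀) * s ^ (-α₀ - 1)
            * Real.exp (-γn / s) * Real.sqrt ((2*π*s) ^ P / Λn.det)
        = ((2 * π * s) ^ (-(P : ℝ) / 2) * Real.sqrt ((2*π*s) ^ P / Λn.det))
            * (Real.sqrt Λ₀.det * (γ₀ ^ α₀ / Real.Gamma α₀))
            * ((2 * π) ^ (-(a₀ * (N₀:ℝ)) / 2)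
              * (s ^ (-(a₀ * (N₀:ℝ)) / 2) * s ^ (-α₀ - 1))
              * Real.exp (-γn / s)) := by rw [e3]; ring
      _ = Real.sqrt (Λ₀.det / Λn.det) * (γ₀ ^ α₀ / Real.Gamma α₀)
            * (2 * π) ^ (-(a₀ * N₀) / 2) * (s ^ (-αn - 1) * Real.exp (-γn / s)) := by
          rw [e1, e4, ← e2]; push_cast; ring
  rw [setIntegral_congr_fun measurableSet_Ioi inner, integral_const_mul,
    inv_gamma_integral hαnpos hγnpos]
  have hΓ₀ : Real.Gamma α₀ ≠ 0 := (Real.Gamma_pos_of_pos hα₀).ne'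
  have hγnα : γn ^ αn ≠ 0 := (Real.rpow_pos_of_pos hγnpos αn).ne'
  field_simp
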